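/- Every finite 3-subgroup of GL₂(ℤ) is cyclic. -/
import Mathlib

open Matrix

lemma key3 (A : GL (Fin 2) ℤ) (h3 : A ^ 3 = 1)
    (hmap : Matrix.GeneralLinearGroup.map (Int.castRingHom (ZMod 3)) A = 1) : A = 1 := by
  set M : Matrix (Fin 2) (Fin 2) ℤ := A.val with hM
  have hmapM : (Int.castRingHom (ZMod 3)).mapMatrix M = 1 := by
    have := congrArg Units.val hmap
    exact this
  have hdvd : ∀ i j, (3 : ℤ) ∣ (M - 1) i j := by
    intro i j
    have h1 : ((M i j : ℤ) : ZMod 3) = (1 : Matrix (Fin 2) (Fin 2) (ZMod 3)) i j := by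
      have := congrArg (fun m => m i j) hmapM
      simpa [RingHom.mapMatrix_apply, Matrix.map_apply] using this
    have : (((M - 1) i j : ℤ) : ZMod 3) = 0 := by
      by_cases h : i = j <;>
        simp [Matrix.sub_apply, Matrix.one_apply, h, h1] at h1 ⊢ <;>
        simp [h1]
    exact_mod_cast (ZMod.intCast_zmod_eq_zero_iff_dvd _ 3).mp this
  set B : Matrix (Fin 2) (Fin 2) ℤ := Matrix.of fun i j => ((M - 1) i j) / 3 with hB
  have hMB : M = 1 + (3 : ℤ) • B := by
    ext i j
    have h2 := Int.ediv_mul_cancel (hdvd i j)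
    simp only [Matrix.sub_apply] at h2
    simp only [Matrix.add_apply, Matrix.smul_apply, hB, Matrix.of_apply, smul_eq_mul,
      Matrix.sub_apply]
    omega
  -- expand the cube
  have hcube : (1 + (3:ℤ) • B) ^ 3 = 1 + (9:ℤ) • (B + (3:ℤ) • B ^ 2 + (3:ℤ) • B ^ 3) := by
    noncomm_ring
  have h3M : M ^ 3 = 1 := by
    have := congrArg Units.val h3
    simpa [hM] using this
  have hz : B + (3:ℤ) • B ^ 2 + (3:ℤ) • B ^ 3 = 0 := by
    have h9 : (9:ℤ) • (B + (3:ℤ) • B ^ 2 + (3:ℤ) • B ^ 3) = 0 := by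
      have := h3M
      rw [hMB, hcube] at this
      have := sub_eq_zero.mpr this
      simpa using this
    ext i j
    have := congrArg (fun m => m i j) h9
    simp only [Matrix.smul_apply, smul_eq_mul, Matrix.zero_apply] at this ⊢
    omega
  -- B * N = 0 with N invertible over ℚ
  set N : Matrix (Fin 2) (Fin 2) ℤ := 1 + (3:ℤ) • B + (3:ℤ) • B ^ 2 with hN
  have hBN : B * N = 0 := by
    have : B * N = B + (3:ℤ) • B ^ 2 + (3:ℤ) • B ^ 3 := by
      simp only [hN, smul_smul]
      noncomm_ring
    rw [this, hz]
  have hdet : N.det ≠ 0 := by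
    intro h0
    have hmapN : (Int.castRingHom (ZMod 3)).mapMatrix N = 1 := by
      ext i j
      simp only [hN, RingHom.mapMatrix_apply, Matrix.map_apply, Matrix.add_apply,
        Matrix.smul_apply, smul_eq_mul]
      by_cases h : i = j <;> simp [Matrix.one_apply, h, show (3:ZMod 3) = 0 by decide]
    have : ((N.det : ℤ) : ZMod 3) = 1 := by
      have := congrArg Matrix.det hmapN
      rwa [← RingHom.map_det, Matrix.det_one] at this
    rw [h0] at this
    simp at this
  have hB0 : B = 0 := by
    have h1 : B * N * N.adjugate = 0 := by rw [hBN, Matrix.zero_mul]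
    rw [Matrix.mul_assoc, Matrix.mul_adjugate] at h1
    ext i j
    have := congrArg (fun m => m i j) h1
    simp only [Matrix.mul_smul, Matrix.mul_one, Matrix.smul_apply, smul_eq_mul,
      Matrix.zero_apply] at this
    exact (mul_eq_zero.mp this).resolve_left hdet
  have : M = 1 := by rw [hMB, hB0]; simp
  exact Units.ext this

theorem stmt_12 (G : Subgroup (GL (Fin 2) ℤ)) [Finite G] (hG : IsPGroup 3 G) :
    IsCyclic G := by
  haveI : Fact (Nat.Prime 3) := ⟨by norm_num⟩
  set f := Matrix.GeneralLinearGroup.map (n := Fin 2) (R := ℤ) (Int.castRingHom (ZMod 3)) with hf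
  set φ : G →* GL (Fin 2) (ZMod 3) := f.comp G.subtype with hφ
  have hinj : Function.Injective φ := by
    rw [injective_iff_map_eq_one]
    intro g hg
    obtain ⟨k, hk⟩ := hG g
    have hgl : (g : GL (Fin 2) ℤ) ^ (3 ^ k) = 1 := by
      have := congrArg G.subtype hk
      simpa using this
    by_contra hne
    have hne' : (g : GL (Fin 2) ℤ) ≠ 1 := by
      intro h; exact hne (Subtype.ext h)
    have hord : orderOf (g : GL (Fin 2) ℤ) ∣ 3 ^ k := orderOf_dvd_of_pow_eq_one hgl
    obtain ⟨m, _, hm⟩ := (Nat.dvd_prime_pow Nat.prime_three).mp hord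
    have hm0 : m ≠ 0 := by
      intro h0; rw [h0, pow_zero] at hm; exact hne' (orderOf_eq_one_iff.mp hm)
    set h : GL (Fin 2) ℤ := (g : GL (Fin 2) ℤ) ^ (3 ^ (m - 1)) with hh
    have hh3 : h ^ 3 = 1 := by
      rw [hh, ← pow_mul, ← pow_succ, Nat.sub_add_cancel (Nat.one_le_iff_ne_zero.mpr hm0)]
      exact hm ▸ pow_orderOf_eq_one _
    have hhmap : f h = 1 := by
      rw [hh, map_pow]
      have : f (g : GL (Fin 2) ℤ) = 1 := hg
      rw [this, one_pow]
    have h1 : h = 1 := key3 h hh3 hhmap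
    have : orderOf (g : GL (Fin 2) ℤ) ∣ 3 ^ (m - 1) := orderOf_dvd_of_pow_eq_one h1
    rw [hm] at this
    have := (Nat.pow_dvd_pow_iff_le_right (by norm_num : 1 < 3)).mp this
    omega
  have hcard48 : Nat.card (GL (Fin 2) (ZMod 3)) = 48 := by
    rw [Matrix.card_GL_field]
    simp [Fin.prod_univ_two, ZMod.card]
  have hdvd : Nat.card G ∣ 48 := by
    rw [← hcard48]
    calc Nat.card G = Nat.card φ.range := Nat.card_congr (MonoidHom.ofInjective hinj).toEquiv
      _ ∣ Nat.card (GL (Fin 2) (ZMod 3)) := Subgroup.card_subgroup_dvd_card _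
  obtain ⟨n, hn⟩ := IsPGroup.iff_card.mp hG
  rw [hn] at hdvd
  have hn1 : n ≤ 1 := by
    by_contra hgt
    have : 9 ∣ 3 ^ n := by
      have : 3 ^ 2 ∣ 3 ^ n := Nat.pow_dvd_pow 3 (by omega)
      simpa using this
    have : (9 : ℕ) ∣ 48 := this.trans hdvd
    norm_num at this
  apply isCyclic_of_card_dvd_prime (p := 3)
  rw [hn]
  interval_cases n
  · norm_num
  · norm_num
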